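/- Let n be a positive integer, let H be a finite group in which every element has order dividing 2 (an elementary abelian 2-group), and let G be the direct product of the dihedral group of order 2n with H. Suppose S ⊆ G satisfies 1 ∉ S, S = S⁻¹, and every element of G is a product of at most two elements of S, with d = |S|. Then |G| ≤ (d + 1)²/2. -/

import Mathlib

open Finset Pointwise

/-- Auxiliary predicate: is an element of `D_{2n} × H` a "rotation" (first component `r i`)? -/
def dpeaRot {n : ℕ} {H : Type*} (g : DihedralGroup n × H) : Bool :=
  match g.1 with
  | .r _ => true
  | .sr _ => false

@[simp] lemma dpeaRot_r {n : ℕ} {H : Type*} (i : ZMod n) (h : H) :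
    dpeaRot ((DihedralGroup.r i, h) : DihedralGroup n × H) = true := rfl

@[simp] lemma dpeaRot_sr {n : ℕ} {H : Type*} (i : ZMod n) (h : H) :
    dpeaRot ((DihedralGroup.sr i, h) : DihedralGroup n × H) = false := rfl

lemma dpeaRot_mul {n : ℕ} {H : Type*} [Group H] (a b : DihedralGroup n × H) :
    dpeaRot (a * b) = (dpeaRot a == dpeaRot b) := by
  obtain ⟨a1, a2⟩ := a; obtain ⟨b1, b2⟩ := b
  rcases a1 with i | i <;> rcases b1 with j | j <;>
    simp [Prod.mk_mul_mk, DihedralGroup.r_mul_r, DihedralGroup.r_mul_sr,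
      DihedralGroup.sr_mul_r, DihedralGroup.sr_mul_sr]

lemma dpeaRot_one {n : ℕ} {H : Type*} [Group H] :
    dpeaRot ((1 : DihedralGroup n × H)) = true := by
  have h : (1 : DihedralGroup n × H) = (DihedralGroup.r 0, 1) := by
    rw [Prod.ext_iff]; exact ⟨DihedralGroup.one_def, rfl⟩
  rw [h]; rfl

lemma dpeaRot_inv {n : ℕ} {H : Type*} [Group H] (a : DihedralGroup n × H) :
    dpeaRot a⁻¹ = dpeaRot a := by
  have h := dpeaRot_mul a a⁻¹
  rw [mul_inv_cancel, dpeaRot_one] at h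
  cases ha : dpeaRot a <;> cases hb : dpeaRot a⁻¹ <;> simp_all

/-- Reflections (paired with any element of an elementary abelian 2-group) are involutions. -/
lemma dpea_invol {n : ℕ} {H : Type*} [Group H] (hH : ∀ h : H, h ^ 2 = 1)
    (g : DihedralGroup n × H) (hg : dpeaRot g = false) : g * g = 1 := by
  obtain ⟨g1, g2⟩ := g
  rcases g1 with i | i
  · simp [dpeaRot] at hg
  · have h2 : g2 * g2 = 1 := by rw [← sq]; exact hH g2
    rw [Prod.mk_mul_mk, DihedralGroup.sr_mul_sr, sub_self, h2, ← DihedralGroup.one_def]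
    rfl

/-- **Remark (extension to `D_{2n} × H` for elementary abelian 2-groups `H`).**
Let `G` be the direct product of the dihedral group of order `2n` (`n ≥ 1`) with a finite
group `H` in which every element has order dividing 2 (an elementary abelian 2-group).
If `S ⊆ G` is inverse-closed, avoids the identity, and every element of `G` is a product
of at most two elements of `S` (so `Cay(G,S)` has diameter at most 2 and degree
`d = |S|`), then `|G| ≤ (d+1)²/2`. -/
theorem dihedral_prod_elementary_abelian_order_bound
    (n : ℕ) (hn : 0 < n)
    (H : Type*) [Group H] [Fintype H] (hH : ∀ h : H, h ^ 2 = 1)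
    (S : Finset (DihedralGroup n × H))
    (h1 : (1 : DihedralGroup n × H) ∉ S)
    (hinv : ∀ s ∈ S, s⁻¹ ∈ S)
    (hcov : ∀ g : DihedralGroup n × H, g = 1 ∨ g ∈ S ∨ ∃ a ∈ S, ∃ b ∈ S, g = a * b)
    (d : ℕ) (hd : d = S.card) :
    (Nat.card (DihedralGroup n × H) : ℝ) ≤ ((d : ℝ) + 1) ^ 2 / 2 := by
  haveI : NeZero n := ⟨hn.ne'⟩
  classical
  let X : Finset (DihedralGroup n × H) := S.filter (fun g => dpeaRot g = true)
  let Y : Finset (DihedralGroup n × H) := S.filter (fun g => dpeaRot g = false)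
  let C : Finset (DihedralGroup n × H) := Finset.univ.filter (fun g => dpeaRot g = false)
  -- C is covered by ({1} ∪ X) * Y
  have hCcov : C ⊆ (insert (1 : DihedralGroup n × H) X) * Y := by
    intro g hg
    simp only [C, mem_filter, mem_univ, true_and] at hg
    have hg1 : g ≠ 1 := by
      intro h; rw [h, dpeaRot_one] at hg; simp at hg
    rcases hcov g with h | h | ⟨a, ha, b, hb, hab⟩
    · exact absurd h hg1
    · have : (1 : DihedralGroup n × H) * g ∈ (insert (1 : DihedralGroup n × H) X) * Y :=
        Finset.mul_mem_mul (Finset.mem_insert_self 1 _)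
          (by simp [Y, Finset.mem_filter, h, hg])
      rwa [one_mul] at this
    · have hpar := dpeaRot_mul a b
      rw [← hab, hg] at hpar
      rcases hA : dpeaRot a with _ | _
      · -- a reflection, b rotation; use g = b⁻¹ * a
        have hB : dpeaRot b = true := by
          rw [hA] at hpar; cases hB : dpeaRot b
          · rw [hB] at hpar; simp at hpar
          · rfl
        have haa : a * a = 1 := dpea_invol hH a hA
        have hginv : g = b⁻¹ * a := by
          have hgg : g * g = 1 := dpea_invol hH g hg
          have hg' : g⁻¹ = g := inv_eq_of_mul_eq_one_right hgg
          calc g = g⁻¹ := hg'.symm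
            _ = (a * b)⁻¹ := by rw [hab]
            _ = b⁻¹ * a⁻¹ := by rw [mul_inv_rev]
            _ = b⁻¹ * a := by rw [inv_eq_of_mul_eq_one_right haa]
        have hbinv : b⁻¹ ∈ insert (1 : DihedralGroup n × H) X := by
          apply Finset.mem_insert_of_mem
          simp only [X, Finset.mem_filter]
          exact ⟨hinv b hb, by rw [dpeaRot_inv]; exact hB⟩
        have haY : a ∈ Y := by simp only [Y, Finset.mem_filter]; exact ⟨ha, hA⟩
        rw [hginv]
        exact Finset.mul_mem_mul hbinv haY
      · -- a rotation, b reflection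
        have hB : dpeaRot b = false := by
          rw [hA] at hpar; cases hB : dpeaRot b
          · rfl
          · rw [hB] at hpar; simp at hpar
        have haX : a ∈ insert (1 : DihedralGroup n × H) X := Finset.mem_insert_of_mem
          (by simp only [X, Finset.mem_filter]; exact ⟨ha, hA⟩)
        have hbY : b ∈ Y := by simp only [Y, Finset.mem_filter]; exact ⟨hb, hB⟩
        rw [hab]
        exact Finset.mul_mem_mul haX hbY
  -- |G| = 2 * |C|
  have hcard2 : Fintype.card (DihedralGroup n × H) = 2 * C.card := by
    have hbij : Cᶜ.card = C.card := by
      apply Finset.card_bij (fun g _ => (DihedralGroup.sr 0, 1) * g)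
      · intro a ha
        simp only [C, Finset.mem_compl, mem_filter, mem_univ, true_and] at ha ⊢
        rw [dpeaRot_mul, dpeaRot_sr]
        cases h : dpeaRot a
        · exact absurd h ha
        · rfl
      · intro a _ b _ h
        exact mul_left_cancel h
      · intro b hb
        simp only [C, mem_filter, mem_univ, true_and] at hb
        refine ⟨(DihedralGroup.sr 0, 1)⁻¹ * b, ?_, by group⟩
        simp only [C, Finset.mem_compl, mem_filter, mem_univ, true_and]
        intro hcon
        rw [dpeaRot_mul, dpeaRot_inv, dpeaRot_sr, hb] at hcon
        simp at hcon
    have := Finset.card_add_card_compl C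
    omega
  -- counting
  have hXY : X.card + Y.card = d := by
    rw [hd]
    have h := Finset.card_filter_add_card_filter_not
      (s := S) (p := fun g => dpeaRot g = true)
    have hY : Y = S.filter (fun a => ¬ dpeaRot a = true) := by
      apply Finset.filter_congr
      intro x _
      cases h : dpeaRot x <;> simp [h]
    rw [← h, hY]
  have hCle : C.card ≤ (X.card + 1) * Y.card := by
    calc C.card ≤ ((insert (1 : DihedralGroup n × H) X) * Y).card :=
          Finset.card_le_card hCcov
      _ ≤ (insert (1 : DihedralGroup n × H) X).card * Y.card := Finset.card_mul_le
      _ ≤ (X.card + 1) * Y.card := by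
          gcongr
          exact Finset.card_insert_le _ _
  have hfin : Nat.card (DihedralGroup n × H) = 2 * C.card := by
    rw [Nat.card_eq_fintype_card, hcard2]
  rw [hfin]
  have hx : (X.card : ℝ) + Y.card = d := by exact_mod_cast hXY
  have hC : (C.card : ℝ) ≤ ((X.card : ℝ) + 1) * Y.card := by exact_mod_cast hCle
  push_cast
  nlinarith [sq_nonneg ((X.card : ℝ) + 1 - Y.card)]
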